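/- Let C be a coalgebra over a commutative ring k and Σ a right C-comodule. Suppose there exist finitely many elements x₁,…,xₙ ∈ Σ and q₁,…,qₙ ∈ Q (with Q as above) such that the C-colinear endomorphism Σᵢ (xᵢ)₍₀₎ qᵢ(-)((xᵢ)₍₁₎) of Σ equals the identity of Σ. Then Σ is a finitely generated projective k-module. -/
import Mathlib


open TensorProduct

noncomputable section

/-- A right comodule structure on `M` over a `k`-coalgebra `C`. -/
structure RightComodule (k C M : Type*) [CommRing k] [AddCommGroup C] [Module k C]
    [Coalgebra k C] [AddCommGroup M] [Module k M] where
  ρ : M →ₗ[k] M ⊗[k] C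
  coassoc : ∀ m : M,
    (TensorProduct.assoc k M C C) (ρ.rTensor C (ρ m)) =
      (Coalgebra.comul (R := k) (A := C)).lTensor M (ρ m)
  counit_comp : ∀ m : M,
    (TensorProduct.rid k M) ((Coalgebra.counit (R := k) (A := C)).lTensor M (ρ m)) = m

variable {k C M N : Type*} [CommRing k] [AddCommGroup C] [Module k C] [Coalgebra k C]

/-- Convolution product on the dual of a coalgebra: `(conv f g) c = ∑ f c₍₁₎ * g c₍₂₎`. -/
def conv (f g : C →ₗ[k] k) : C →ₗ[k] k :=
  (TensorProduct.lid k k).toLinearMap ∘ₗ TensorProduct.map f g ∘ₗ Coalgebra.comul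

/-- The right action of the dual of `C` on a right `C`-comodule: `x · f = ∑ x₍₀₎ * f x₍₁₎`. -/
def ract [AddCommGroup M] [Module k M] (σ : RightComodule k C M) (m : M)
    (f : C →ₗ[k] k) : M :=
  (TensorProduct.rid k M) (f.lTensor M (σ.ρ m))

/-- A map of right `C`-comodules. -/
def IsColinear [AddCommGroup M] [Module k M] [AddCommGroup N] [Module k N]
    (σM : RightComodule k C M) (σN : RightComodule k C N) (φ : M →ₗ[k] N) : Prop :=
  φ.rTensor C ∘ₗ σM.ρ = σN.ρ ∘ₗ φ

/-- The `k`-module `Q` associated to a right `C`-comodule `M`: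
maps `q : M → C*` with `∑ q x₍₀₎ c • x₍₁₎ = ∑ c₍₁₎ • q x c₍₂₎` for all `x, c`. -/
def QSet [AddCommGroup M] [Module k M] (σ : RightComodule k C M) :
    Set (M →ₗ[k] C →ₗ[k] k) :=
  { q | ∀ (x : M) (c : C),
      (TensorProduct.lid k C) (((LinearMap.applyₗ c).comp q).rTensor C (σ.ρ x)) =
      (TensorProduct.rid k C) ((q x).lTensor C (Coalgebra.comul c)) }

theorem stmt_4 {P : Type*} [AddCommGroup P] [Module k P] (σ : RightComodule k C P)
    (n : ℕ) (x : Fin n → P) (q : Fin n → (P →ₗ[k] C →ₗ[k] k))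
    (hq : ∀ i, q i ∈ QSet σ)
    -- the colinear endomorphism `y ↦ ∑ᵢ (xᵢ)₍₀₎ • (qᵢ y) (xᵢ)₍₁₎` is the identity of `P`
    (hid : ∀ y : P,
      ∑ i, (TensorProduct.rid k P) ((((q i) y).lTensor P) (σ.ρ (x i))) = y) :
    Module.Finite k P ∧ Module.Projective k P := by
  choose S hS using fun i => TensorProduct.exists_finset (σ.ρ (x i))
  -- index type
  set ι := (i : Fin n) × {p // p ∈ S i} with hι
  have key : ∀ y : P, ∑ j : ι, ((q j.1 y) j.2.1.2) • j.2.1.1 = y := by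
    intro y
    rw [← Finset.univ_sigma_univ, Finset.sum_sigma]
    conv_rhs => rw [← hid y]
    refine Finset.sum_congr rfl fun i _ => ?_
    rw [hS i, map_sum, map_sum, ← Finset.sum_coe_sort (S i)]
    exact Finset.sum_congr rfl fun p _ => by simp
  -- split maps
  let s : P →ₗ[k] (ι → k) := LinearMap.pi fun j => (LinearMap.applyₗ j.2.1.2).comp (q j.1)
  let g : (ι → k) →ₗ[k] P := ∑ j : ι, (LinearMap.proj j).smulRight j.2.1.1
  have hgs : g.comp s = LinearMap.id := by
    ext y
    simpa [g, s, LinearMap.sum_apply] using key y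
  have hsurj : Function.Surjective g := fun y =>
    ⟨s y, by simpa using congrFun (congrArg (fun f => f.toFun) hgs) y⟩
  exact ⟨Module.Finite.of_surjective g hsurj, Module.Projective.of_split s g hgs⟩
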